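/- Let f(x) = f(0) + Σᵢ₌₁ⁿ xᵢ^{2d} + f_α x^α be a polynomial with a single extra term f_α x^α where x^α is not a square times a constant, |α| < 2d, f_α ≠ 0. If M ≥ |α|·[(f_α/2d)^{2d}·α^α]^{1/(2d-|α|)}, then f(x) ≥ f(0) - (2d - |α|)·[(f_α/2d)^{2d}·α^α]^{1/(2d-|α|)} for all x with Σᵢ xᵢ^{2d} ≤ M. -/

import Mathlib

open Finset Real

/-- For `f(x) = f(0) + ∑ᵢ xᵢ^(2d) + f_α x^α` with `0 < |α| < 2d` and
`f_α x^α` not a square, if `M ≥ |α|·[(f_α/2d)^(2d)·α^α]^(1/(2d-|α|))` then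
`f(x) ≥ f(0) - (2d-|α|)·[(f_α/2d)^(2d)·α^α]^(1/(2d-|α|))` on the ball. -/
theorem stmt_10 (n d : ℕ) (hd : 1 ≤ d) (α : Fin n → ℕ)
    (hα0 : 0 < ∑ i, α i) (hαlt : ∑ i, α i < 2 * d)
    (fα : ℝ) (hfα : fα ≠ 0) (hns : ¬ (0 ≤ fα ∧ ∀ i, Even (α i)))
    (f0 M : ℝ) (hM : 0 < M)
    (hMge : ((∑ i, α i : ℕ) : ℝ) *
        (((fα / (2 * (d : ℝ))) ^ (2 * d) * ∏ i, ((α i : ℝ)) ^ (α i)) ^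
          ((1 : ℝ) / (2 * (d : ℝ) - ((∑ i, α i : ℕ) : ℝ)))) ≤ M) :
    ∀ x : Fin n → ℝ, (∑ i, x i ^ (2 * d)) ≤ M →
      f0 - (2 * (d : ℝ) - ((∑ i, α i : ℕ) : ℝ)) *
          (((fα / (2 * (d : ℝ))) ^ (2 * d) * ∏ i, ((α i : ℝ)) ^ (α i)) ^
            ((1 : ℝ) / (2 * (d : ℝ) - ((∑ i, α i : ℕ) : ℝ)))) ≤
        f0 + (∑ i, x i ^ (2 * d)) + fα * ∏ i, x i ^ (α i) := by
  intro x hx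
  set e : ℝ := 2 * (d : ℝ) - ((∑ i, α i : ℕ) : ℝ) with hedef
  set A : ℝ := (fα / (2 * (d : ℝ))) ^ (2 * d) * ∏ i, ((α i : ℝ)) ^ (α i) with hAdef
  set c : ℝ := A ^ ((1 : ℝ) / e) with hcdef
  have hd2 : (0:ℝ) < 2 * (d:ℝ) := by positivity
  have hs2d : ((∑ i, α i : ℕ) : ℝ) < 2 * (d:ℝ) := by exact_mod_cast hαlt
  have he : 0 < e := by rw [hedef]; linarith
  have hprodα : 0 < ∏ i, ((α i : ℝ)) ^ (α i) := by
    apply Finset.prod_pos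
    intro i _
    rcases Nat.eq_zero_or_pos (α i) with h | h
    · simp [h]
    · positivity
  have hA : 0 < A := by
    have h1 : 0 < (fα / (2 * (d : ℝ))) ^ (2 * d) :=
      (even_two_mul d).pow_pos (by positivity)
    exact mul_pos h1 hprodα
  have hc : 0 < c := rpow_pos_of_pos hA _
  have hceA : c ^ e = A := by
    rw [hcdef, ← Real.rpow_mul hA.le, one_div_mul_cancel he.ne', Real.rpow_one]
  have hexp : ∀ a : ℝ, ((2 * d : ℕ) : ℝ) * (a / (2 * (d:ℝ))) = a := by
    intro a; push_cast; field_simp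
  have hexp2 : ∀ a : ℝ, a / (2 * (d:ℝ)) * ((2 * d : ℕ) : ℝ) = a := by
    intro a; push_cast; field_simp
  -- the weights and values for AM-GM
  set w : Option (Fin n) → ℝ :=
    fun o => Option.elim o (e / (2 * (d:ℝ))) (fun i => (α i : ℝ) / (2 * (d:ℝ))) with hwdef
  set z : Option (Fin n) → ℝ :=
    fun o => Option.elim o ((2 * (d:ℝ)) * c)
      (fun i => if α i = 0 then 1 else ((2 * (d:ℝ)) / (α i)) * x i ^ (2 * d)) with hzdef
  have hw : ∀ o ∈ Finset.univ, 0 ≤ w o := by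
    rintro (_ | i) _
    · exact div_nonneg he.le hd2.le
    · exact div_nonneg (Nat.cast_nonneg _) hd2.le
  have hw' : ∑ o, w o = 1 := by
    rw [Fintype.sum_option]
    simp only [hwdef, Option.elim]
    rw [← Finset.sum_div]
    rw [← Nat.cast_sum]
    rw [hedef]
    field_simp
    ring
  have hz : ∀ o ∈ Finset.univ, 0 ≤ z o := by
    rintro (_ | i) _
    · exact mul_nonneg hd2.le hc.le
    · simp only [hzdef, Option.elim]
      split
      · exact zero_le_one
      · exact mul_nonneg (by positivity) ((even_two_mul d).pow_nonneg _)
  have amgm := Real.geom_mean_le_arith_mean_weighted Finset.univ w z hw hw' hz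
  -- upper bound on the arithmetic mean
  have hsum : ∑ o, w o * z o ≤ (∑ i, x i ^ (2 * d)) + e * c := by
    rw [Fintype.sum_option]
    have h1 : w none * z none = e * c := by
      simp only [hwdef, hzdef, Option.elim]
      field_simp
    have h2 : ∑ i, w (some i) * z (some i) ≤ ∑ i, x i ^ (2 * d) := by
      apply Finset.sum_le_sum
      intro i _
      simp only [hwdef, hzdef, Option.elim]
      by_cases hαi : α i = 0
      · simp [hαi]
        exact (even_two_mul d).pow_nonneg _
      · rw [if_neg hαi]
        have hαi' : (0:ℝ) < (α i : ℝ) := by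
          exact_mod_cast Nat.pos_of_ne_zero hαi
        have : (α i : ℝ) / (2 * (d:ℝ)) * (2 * (d:ℝ) / (α i) * x i ^ (2 * d))
            = x i ^ (2 * d) := by field_simp
        rw [this]

    linarith
  -- the geometric mean equals |fα| * ∏ |x i| ^ α i
  have hgeom : |fα| * ∏ i, |x i| ^ α i = ∏ o, z o ^ w o := by
    rw [Fintype.prod_option]
    set u : Fin n → ℝ :=
      fun i => if α i = 0 then (1:ℝ)
        else ((2 * (d:ℝ)) / (α i)) ^ ((α i : ℝ) / (2 * (d:ℝ))) with hudef
    have hu : ∀ i, 0 ≤ u i := by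
      intro i
      simp only [hudef]
      split
      · exact zero_le_one
      · exact Real.rpow_nonneg (by positivity) _
    have hzu : ∀ i, z (some i) ^ w (some i) = u i * |x i| ^ α i := by
      intro i
      simp only [hwdef, hzdef, hudef, Option.elim]
      by_cases hαi : α i = 0
      · simp [hαi]
      · rw [if_neg hαi, if_neg hαi]
        have hαi' : (0:ℝ) < (α i : ℝ) := by
          exact_mod_cast Nat.pos_of_ne_zero hαi
        rw [Real.mul_rpow (by positivity) ((even_two_mul d).pow_nonneg _)]
        congr 1
        have hxabs : x i ^ (2 * d) = |x i| ^ (2 * d) := ((even_two_mul d).pow_abs _).symm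
        rw [hxabs, ← Real.rpow_natCast |x i| (2 * d), ← Real.rpow_mul (abs_nonneg _),
          hexp, Real.rpow_natCast]

    have hK : ((2 * (d:ℝ)) * c) ^ (e / (2 * (d:ℝ))) * ∏ i, u i = |fα| := by
      set K : ℝ := ((2 * (d:ℝ)) * c) ^ (e / (2 * (d:ℝ))) * ∏ i, u i with hKdef
      have hK0 : 0 ≤ K :=
        mul_nonneg (Real.rpow_nonneg (by positivity) _)
          (Finset.prod_nonneg fun i _ => hu i)
      have hKpow : K ^ (2 * d) = |fα| ^ (2 * d) := by
        have hupow : ∀ i, u i ^ (2 * d) = ((2 * (d:ℝ)) / (α i)) ^ (α i) := by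
          intro i
          simp only [hudef]
          by_cases hαi : α i = 0
          · simp [hαi]
          · rw [if_neg hαi, ← Real.rpow_natCast (((2 * (d:ℝ)) / (α i)) ^ ((α i : ℝ) / (2 * (d:ℝ)))) (2 * d),
              ← Real.rpow_mul (by positivity), hexp2, Real.rpow_natCast]
        have hstep : K ^ (2 * d) = ((2 * (d:ℝ)) * c) ^ e * ∏ i, ((2 * (d:ℝ)) / (α i)) ^ (α i) := by
          rw [hKdef, mul_pow, ← Real.rpow_natCast (((2 * (d:ℝ)) * c) ^ (e / (2 * (d:ℝ)))) (2 * d),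
            ← Real.rpow_mul (by positivity), hexp2, ← Finset.prod_pow]
          congr 1
          exact Finset.prod_congr rfl fun i _ => hupow i
        rw [hstep]
        have hmc : ((2 * (d:ℝ)) * c) ^ e = (2 * (d:ℝ)) ^ e * A := by
          rw [Real.mul_rpow hd2.le hc.le, hceA]
        have hprod2 : ∏ i, ((2 * (d:ℝ)) / (α i)) ^ (α i)
            = (2 * (d:ℝ)) ^ (∑ i, α i) / ∏ i, ((α i : ℝ)) ^ (α i) := by
          rw [← Finset.prod_pow_eq_pow_sum, ← Finset.prod_div_distrib]
          exact Finset.prod_congr rfl fun i _ => div_pow _ _ _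
        rw [hmc, hprod2, hAdef]
        rw [div_pow fα (2 * (d:ℝ)) (2 * d)]
        have habs : |fα| ^ (2 * d) = fα ^ (2 * d) := (even_two_mul d).pow_abs _
        rw [habs]
        have hpows : (2 * (d:ℝ)) ^ e * (2 * (d:ℝ)) ^ (∑ i, α i) = (2 * (d:ℝ)) ^ (2 * d) := by
          rw [← Real.rpow_natCast (2 * (d:ℝ)) (∑ i, α i), ← Real.rpow_add hd2,
            ← Real.rpow_natCast (2 * (d:ℝ)) (2 * d)]
          congr 1
          rw [hedef]
          push_cast
          ring
        field_simp
        linear_combination hpows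
      have h2d0 : 2 * d ≠ 0 := by omega
      exact (pow_left_strictMonoOn₀ h2d0).injOn hK0 (abs_nonneg fα) hKpow
    calc |fα| * ∏ i, |x i| ^ α i
        = (((2 * (d:ℝ)) * c) ^ (e / (2 * (d:ℝ))) * ∏ i, u i) * ∏ i, |x i| ^ α i := by rw [hK]
      _ = ((2 * (d:ℝ)) * c) ^ (e / (2 * (d:ℝ))) * ∏ i, (u i * |x i| ^ α i) := by
          rw [Finset.prod_mul_distrib]; ring
      _ = z none ^ w none * ∏ i, z (some i) ^ w (some i) := by
          simp only [hwdef, hzdef, Option.elim]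
          congr 1
          exact (Finset.prod_congr rfl fun i _ => (hzu i).symm)
  -- combine
  have key : |fα| * ∏ i, |x i| ^ α i ≤ (∑ i, x i ^ (2 * d)) + e * c := by
    rw [hgeom]; exact le_trans amgm hsum
  have habs2 : |fα * ∏ i, x i ^ α i| = |fα| * ∏ i, |x i| ^ α i := by
    rw [abs_mul, Finset.abs_prod]
    congr 1
    exact Finset.prod_congr rfl fun i _ => abs_pow _ _
  have hlow : -(|fα| * ∏ i, |x i| ^ α i) ≤ fα * ∏ i, x i ^ α i := by
    rw [← habs2]; exact neg_abs_le _
  linarith
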